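/- Let α, v*, M₂ be positive real constants and M₁ ∈ ℝ. The function f(s) = 16α(v*)²/M₂ − s·log((2v* + |M₁|s)/(v* + |M₁|s)) is strictly decreasing on (0, ∞). -/

import Mathlib

/-- The function `f(s) = 16α(v*)²/M₂ − s·log((2v* + |M₁|s)/(v* + |M₁|s))` is strictly
decreasing on `(0, ∞)`. -/
theorem f_strictAntiOn
    (α vs M₂ M₁ : ℝ) (hα : 0 < α) (hvs : 0 < vs) (hM₂ : 0 < M₂) :
    StrictAntiOn
      (fun s : ℝ => 16 * α * vs ^ 2 / M₂ -
        s * Real.log ((2 * vs + |M₁| * s) / (vs + |M₁| * s)))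
      (Set.Ioi 0) := by
  set m := |M₁| with hmdef
  have hm : 0 ≤ m := abs_nonneg _
  have hD : ∀ x : ℝ, x ∈ Set.Ioi (0:ℝ) → 0 < vs + m * x := by
    intro x hx; have hx' : (0:ℝ) < x := hx; positivity
  have hN : ∀ x : ℝ, x ∈ Set.Ioi (0:ℝ) → 0 < 2 * vs + m * x := by
    intro x hx; have hx' : (0:ℝ) < x := hx; positivity
  have hderiv : ∀ x ∈ Set.Ioi (0:ℝ), HasDerivAt
      (fun s : ℝ => 16 * α * vs ^ 2 / M₂ -
        s * (Real.log (2 * vs + m * s) - Real.log (vs + m * s)))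
      (-(1 * (Real.log (2 * vs + m * x) - Real.log (vs + m * x)) +
        x * (m / (2 * vs + m * x) - m / (vs + m * x)))) x := by
    intro x hx
    have hNx := hN x hx
    have hDx := hD x hx
    have hlin : ∀ c : ℝ, HasDerivAt (fun s : ℝ => c + m * s) m x := by
      intro c
      have h := ((hasDerivAt_id' x).const_mul m).const_add c
      rwa [mul_one] at h
    have hmain : HasDerivAt
        (fun s : ℝ => s * (Real.log (2 * vs + m * s) - Real.log (vs + m * s)))
        (1 * (Real.log (2 * vs + m * x) - Real.log (vs + m * x)) +
          x * (m / (2 * vs + m * x) - m / (vs + m * x))) x :=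
      (hasDerivAt_id x).mul (((hlin (2*vs)).log hNx.ne').sub ((hlin vs).log hDx.ne'))
    exact ((hasDerivAt_const x (16 * α * vs ^ 2 / M₂)).sub hmain).congr_deriv (by ring)
  have key : StrictAntiOn
      (fun s : ℝ => 16 * α * vs ^ 2 / M₂ -
        s * (Real.log (2 * vs + m * s) - Real.log (vs + m * s))) (Set.Ioi 0) := by
    apply strictAntiOn_of_hasDerivWithinAt_neg (convex_Ioi 0)
      (fun x hx => (hderiv x hx).continuousAt.continuousWithinAt)
      (fun x hx => by rw [interior_Ioi] at hx ⊢; exact (hderiv x hx).hasDerivWithinAt)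
    intro x hx
    rw [interior_Ioi] at hx
    have hx0 : 0 < x := hx
    have ha : 0 < vs + m * x := hD x hx
    have hb : 0 < 2 * vs + m * x := hN x hx
    set a := vs + m * x with hadef
    set b := 2 * vs + m * x with hbdef
    have hab : a < b := by rw [hadef, hbdef]; linarith
    have hba : b = a + vs := by rw [hadef, hbdef]; ring
    -- log b - log a > vs / b
    have h1 : Real.log a - Real.log b < -(vs / b) := by
      have h := Real.log_lt_sub_one_of_pos (x := a / b) (by positivity)
        (ne_of_lt ((div_lt_one hb).mpr hab))
      rw [Real.log_div ha.ne' hb.ne'] at h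
      have e : a / b - 1 = -(vs / b) := by rw [hba]; field_simp; ring
      linarith [e ▸ h]
    have e1 : x * (m / b - m / a) = -(x * m * vs / (a * b)) := by
      rw [hba]; field_simp; ring
    have e2 : vs / b - x * m * vs / (a * b) = vs ^ 2 / (a * b) := by
      rw [hadef]; field_simp; ring
    have e3 : 0 < vs ^ 2 / (a * b) := by positivity
    have hpos : 0 < 1 * (Real.log b - Real.log a) + x * (m / b - m / a) := by
      rw [e1]; linarith
    linarith
  intro x hx y hy hxy
  have ex : ∀ z : ℝ, z ∈ Set.Ioi (0:ℝ) →
      Real.log ((2 * vs + m * z) / (vs + m * z)) =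
        Real.log (2 * vs + m * z) - Real.log (vs + m * z) := fun z hz =>
    Real.log_div (hN z hz).ne' (hD z hz).ne'
  have hk := key hx hy hxy
  simpa [ex x hx, ex y hy] using hk
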